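/- ∫_{1/2}^{2} (x^{5/2} − 1)/(x²·(x − 1)) dx + ∫_{0}^{1/2} √x/(x − 1) dx = ∫_{0}^{2} (√x − 1)/(x − 1) dx + ln 2 + 3/2. -/

import Mathlib

open MeasureTheory intervalIntegral

noncomputable def Fa (x : ℝ) : ℝ := 2 * Real.sqrt x - 2 * Real.log (Real.sqrt x + 1)

lemma hasDerivAt_Fa {x : ℝ} (hx : 0 < x) :
    HasDerivAt Fa (1 / (Real.sqrt x + 1)) x := by
  have hs : 0 < Real.sqrt x := Real.sqrt_pos.2 hx
  have h1 : HasDerivAt Real.sqrt (1 / (2 * Real.sqrt x)) x := Real.hasDerivAt_sqrt hx.ne'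
  have h2 : HasDerivAt (fun y => Real.sqrt y + 1) (1 / (2 * Real.sqrt x)) x := h1.add_const 1
  have h3 : HasDerivAt (fun y => Real.log (Real.sqrt y + 1))
      ((Real.sqrt x + 1)⁻¹ * (1 / (2 * Real.sqrt x))) x :=
    (Real.hasDerivAt_log (by positivity)).comp x h2
  have h4 := (h1.const_mul 2).sub (h3.const_mul 2)
  refine h4.congr_deriv ?_
  have h5 : Real.sqrt x + 1 ≠ 0 := by positivity
  have hs' : Real.sqrt x ≠ 0 := hs.ne'
  have e1 : (Real.sqrt x + 1)⁻¹ * (Real.sqrt x + 1) = 1 := inv_mul_cancel₀ h5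
  have e2 : (Real.sqrt x)⁻¹ * Real.sqrt x = 1 := inv_mul_cancel₀ hs'
  linear_combination (-(Real.sqrt x)⁻¹ : ℝ) * e1 + ((Real.sqrt x + 1)⁻¹ : ℝ) * e2

lemma cont_Fa : Continuous Fa := by
  apply Continuous.sub
  · exact continuous_const.mul Real.continuous_sqrt
  · apply continuous_const.mul
    rw [continuous_iff_continuousAt]
    intro x
    exact (Real.continuousAt_log (by positivity)).comp
      ((Real.continuous_sqrt.add continuous_const).continuousAt)

lemma cont_core : Continuous (fun x : ℝ => 1 / (Real.sqrt x + 1)) :=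
  continuous_const.div (Real.continuous_sqrt.add continuous_const) (fun x => by positivity)

lemma ae_ne_one : ∀ᵐ x : ℝ, x ≠ 1 := by
  rw [Filter.eventually_iff, mem_ae_iff]
  have : {x : ℝ | x ≠ 1}ᶜ = {(1 : ℝ)} := by ext y; simp [not_not]
  rw [this]
  exact Real.volume_singleton

lemma int3 : (∫ x in (0 : ℝ)..2, (Real.sqrt x - 1) / (x - 1)) = Fa 2 - Fa 0 := by
  have hcongr : (∫ x in (0 : ℝ)..2, (Real.sqrt x - 1) / (x - 1))
      = ∫ x in (0 : ℝ)..2, 1 / (Real.sqrt x + 1) := by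
    apply intervalIntegral.integral_congr_ae
    filter_upwards [ae_ne_one] with x hx1 hx
    have hx0 : 0 < x := by
      rcases Set.mem_uIoc.1 hx with h | h
      · exact h.1
      · linarith [h.1, h.2]
    have hsq : Real.sqrt x ^ 2 = x := Real.sq_sqrt hx0.le
    have hs1 : Real.sqrt x + 1 ≠ 0 := by positivity
    have hx1' : x - 1 ≠ 0 := sub_ne_zero.2 hx1
    rw [div_eq_div_iff hx1' hs1]
    linear_combination hsq
  rw [hcongr]
  exact integral_eq_sub_of_hasDerivAt_of_le (by norm_num) cont_Fa.continuousOn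
    (fun x hx => hasDerivAt_Fa hx.1) (cont_core.intervalIntegrable _ _)

lemma int2 : (∫ x in (0 : ℝ)..(1/2), Real.sqrt x / (x - 1))
    = (Fa (1/2) + Real.log (1/2 - 1)) - (Fa 0 + Real.log (0 - 1)) := by
  have hcongr : (∫ x in (0 : ℝ)..(1/2), Real.sqrt x / (x - 1))
      = ∫ x in (0 : ℝ)..(1/2), (1 / (Real.sqrt x + 1) + 1 / (x - 1)) := by
    apply intervalIntegral.integral_congr_ae
    filter_upwards with x hx
    have hx' : x ∈ Set.Ioc (0 : ℝ) (1/2) := by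
      rcases Set.mem_uIoc.1 hx with h | h
      · exact h
      · norm_num at h; linarith [h.1, h.2]
    have hx0 : 0 < x := hx'.1
    have hsq : Real.sqrt x ^ 2 = x := Real.sq_sqrt hx0.le
    have hs1 : Real.sqrt x + 1 ≠ 0 := by positivity
    have hx1 : x - 1 ≠ 0 := by nlinarith [hx'.2]
    field_simp
    linear_combination hsq
  rw [hcongr]
  have hcont : ContinuousOn (fun x : ℝ => Fa x + Real.log (x - 1)) (Set.Icc 0 (1/2)) := by
    apply cont_Fa.continuousOn.add
    intro x hx
    have hx1 : x - 1 ≠ 0 := by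
      have := hx.2; intro h; simp only [Set.mem_Icc] at hx; nlinarith [hx.2]
    have hc : ContinuousAt (fun y : ℝ => Real.log (y - 1)) x := by
      have := ContinuousAt.comp (g := Real.log) (f := fun y : ℝ => y - 1)
        (x := x) (Real.continuousAt_log hx1) (by fun_prop)
      exact this
    exact hc.continuousWithinAt
  have hint : IntervalIntegrable (fun x : ℝ => 1 / (Real.sqrt x + 1) + 1 / (x - 1))
      volume 0 (1/2) := by
    apply (cont_core.intervalIntegrable _ _).add
    apply ContinuousOn.intervalIntegrable
    apply ContinuousOn.div continuousOn_const
      ((continuous_id.sub continuous_const).continuousOn)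
    intro x hx
    rw [Set.uIcc_of_le (by norm_num)] at hx
    simp only [Set.mem_Icc] at hx
    intro h; simp only [Pi.sub_apply, id_eq] at h; linarith [hx.2]
  have := integral_eq_sub_of_hasDerivAt_of_le (by norm_num : (0:ℝ) ≤ 1/2) hcont
    (f' := fun x : ℝ => 1 / (Real.sqrt x + 1) + 1 / (x - 1))
    (fun x hx => by
      have hd1 : HasDerivAt (fun y : ℝ => Real.log (y - 1)) ((x - 1)⁻¹) x := by
        have hx1 : x - 1 ≠ 0 := by
          have := hx.2; intro h; simp only [Set.mem_Ioo] at hx; nlinarith [hx.2]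
        exact ((Real.hasDerivAt_log hx1).comp x ((hasDerivAt_id x).sub_const 1)).congr_deriv (mul_one _)
      have := (hasDerivAt_Fa hx.1).add hd1
      exact this.congr_deriv (by simp [one_div])) hint
  rw [this]

lemma aux1 (s : ℝ) (hs : 0 < s) (hs1 : s ≠ 1) :
    (s ^ 5 - 1) / ((s ^ 2) ^ 2 * (s ^ 2 - 1)) = 1 / (s + 1) + 1 / s ^ 2 + 1 / (s ^ 2) ^ 2 := by
  have h1 : s + 1 ≠ 0 := by positivity
  have h2 : s - 1 ≠ 0 := sub_ne_zero.2 hs1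
  have h3 : s ≠ 0 := hs.ne'
  have h4 : s ^ 2 - 1 = (s - 1) * (s + 1) := by ring
  rw [h4]
  field_simp
  ring

lemma int1 : (∫ x in (1/2 : ℝ)..2, (x ^ ((5 : ℝ)/2) - 1) / (x ^ 2 * (x - 1)))
    = (Fa 2 + Real.log 2 - 1/2) - (Fa (1/2) + Real.log (1/2) - 2) := by
  have hcongr : (∫ x in (1/2 : ℝ)..2, (x ^ ((5 : ℝ)/2) - 1) / (x ^ 2 * (x - 1)))
      = ∫ x in (1/2 : ℝ)..2, (1 / (Real.sqrt x + 1) + 1 / x + 1 / x ^ 2) := by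
    apply intervalIntegral.integral_congr_ae
    filter_upwards [ae_ne_one] with x hx1 hx
    have hx' : x ∈ Set.Ioc (1/2 : ℝ) 2 := by
      rcases Set.mem_uIoc.1 hx with h | h
      · exact h
      · norm_num at h; linarith [h.1, h.2]
    have hx0 : 0 < x := by linarith [hx'.1]
    have hsq : Real.sqrt x ^ 2 = x := Real.sq_sqrt hx0.le
    have hs0 : 0 < Real.sqrt x := Real.sqrt_pos.2 hx0
    have hsne1 : Real.sqrt x ≠ 1 := fun h => hx1 (by rw [← hsq, h]; norm_num)
    have hrpow : x ^ ((5 : ℝ)/2) = Real.sqrt x ^ 5 := by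
      rw [Real.sqrt_eq_rpow, ← Real.rpow_natCast (x ^ ((1:ℝ)/2)) 5, ← Real.rpow_mul hx0.le]
      norm_num
    have key := aux1 (Real.sqrt x) hs0 hsne1
    rw [hsq] at key
    rw [hrpow, key]
  rw [hcongr]
  have hcont : ContinuousOn (fun x : ℝ => Fa x + Real.log x - 1/x) (Set.Icc (1/2) 2) := by
    apply ContinuousOn.sub
    · apply cont_Fa.continuousOn.add
      intro x hx
      exact (Real.continuousAt_log (by simp only [Set.mem_Icc] at hx; linarith [hx.1]
        )).continuousWithinAt
    · apply ContinuousOn.div continuousOn_const continuous_id.continuousOn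
      intro x hx
      simp only [Set.mem_Icc] at hx
      simp only [id_eq]
      intro h; linarith [hx.1]
  have hint : IntervalIntegrable (fun x : ℝ => 1 / (Real.sqrt x + 1) + 1 / x + 1 / x ^ 2)
      volume (1/2) 2 := by
    apply ContinuousOn.intervalIntegrable
    have huIcc : Set.uIcc (1/2 : ℝ) 2 = Set.Icc (1/2) 2 := Set.uIcc_of_le (by norm_num)
    rw [huIcc]
    apply ContinuousOn.add
    apply ContinuousOn.add cont_core.continuousOn
    · apply ContinuousOn.div continuousOn_const continuous_id.continuousOn
      intro x hx
      simp only [Set.mem_Icc] at hx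
      simp only [id_eq]
      intro h; linarith [hx.1]
    · apply ContinuousOn.div continuousOn_const (continuous_pow 2).continuousOn
      intro x hx
      simp only [Set.mem_Icc] at hx
      intro h
      have : x ≠ 0 := fun h0 => by rw [h0] at hx; linarith [hx.1]
      exact this (pow_eq_zero_iff (n := 2) (by norm_num) |>.1 h)
  have := integral_eq_sub_of_hasDerivAt_of_le (by norm_num : (1/2:ℝ) ≤ 2) hcont
    (f' := fun x : ℝ => 1 / (Real.sqrt x + 1) + 1 / x + 1 / x ^ 2)
    (fun x hx => by
      have hx0 : 0 < x := by simp only [Set.mem_Ioo] at hx; linarith [hx.1]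
      have hinv : HasDerivAt (fun y : ℝ => 1/y) (-(x ^ 2)⁻¹) x := by
        simpa [one_div] using hasDerivAt_inv hx0.ne'
      have := ((hasDerivAt_Fa hx0).add (Real.hasDerivAt_log hx0.ne')).sub hinv
      convert this using 1
      · rfl
      · ring) hint
  rw [this]
  norm_num

theorem stmt_12 :
    (∫ x in (1/2 : ℝ)..2, (x ^ ((5 : ℝ)/2) - 1) / (x ^ 2 * (x - 1)))
      + (∫ x in (0 : ℝ)..(1/2), Real.sqrt x / (x - 1))
      = (∫ x in (0 : ℝ)..2, (Real.sqrt x - 1) / (x - 1)) + Real.log 2 + 3/2 := by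
  rw [int1, int2, int3]
  have h0 : Fa 0 = 0 := by simp [Fa]
  have h1 : Real.log ((1:ℝ)/2) = -Real.log 2 := by
    rw [one_div, Real.log_inv]
  have h2 : Real.log ((1:ℝ)/2 - 1) = -Real.log 2 := by
    rw [show ((1:ℝ)/2 - 1) = -(1/2) by norm_num, Real.log_neg_eq_log, one_div, Real.log_inv]
  have h3 : Real.log ((0:ℝ) - 1) = 0 := by
    rw [show ((0:ℝ) - 1) = -1 by norm_num, Real.log_neg_eq_log, Real.log_one]
  rw [h0, h1, h2, h3]
  ring
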